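/- Let c > 0, let λ : [0,∞) → ℝ be continuous with λ(t) ≥ λ₀ > 0 for all t, and let x : [0,∞) → ℝ be differentiable with x'(t) = λ(t) x(t) (x(t) − c) for all t ≥ 0 and x(0) ∈ [0, c). Then x(t) ∈ [0, c) for all t, x is nonincreasing, and x(t) → 0 as t → ∞. -/

import Mathlib

open Set Filter

/-- Case 4 of Theorem 3.2 (`μ ≡ 0`): for the nonautonomous ODE
`x' = λ(t) x (x − c)` with `λ(t) ≥ λ₀ > 0`, every trajectory starting in `[0, c)`
stays in `[0, c)`, is nonincreasing, and converges to `0`. -/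
theorem stmt_11 (c : ℝ) (hc : 0 < c) (lam : ℝ → ℝ)
    (hlamc : Continuous lam)
    (lam₀ : ℝ) (hlam₀ : 0 < lam₀) (hlam : ∀ t : ℝ, lam₀ ≤ lam t)
    (x : ℝ → ℝ)
    (hx : ∀ t ≥ (0 : ℝ), HasDerivAt x (lam t * x t * (x t - c)) t)
    (hx0 : x 0 ∈ Ico (0 : ℝ) c) :
    (∀ t ≥ (0 : ℝ), x t ∈ Ico (0 : ℝ) c) ∧
    AntitoneOn x (Ici (0 : ℝ)) ∧
    Tendsto x atTop (nhds 0) := by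
  obtain ⟨hx0l, hx0r⟩ := hx0
  have hcx0 : 0 < c - x 0 := sub_pos.2 hx0r
  set a : ℝ := x 0 / (c - x 0) with ha_def
  have ha : 0 ≤ a := div_nonneg hx0l hcx0.le
  set Λ : ℝ → ℝ := fun t => ∫ s in (0:ℝ)..t, lam s with hΛ_def
  have hΛ' : ∀ t, HasDerivAt Λ (lam t) t := fun t =>
    intervalIntegral.integral_hasDerivAt_right (hlamc.intervalIntegrable 0 t)
      (hlamc.stronglyMeasurableAtFilter _ _) hlamc.continuousAt
  set u : ℝ → ℝ := fun t => a * Real.exp (-(c * Λ t)) with hu_def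
  have hu0 : ∀ t, 0 ≤ u t := fun t => mul_nonneg ha (Real.exp_nonneg _)
  have h1u : ∀ t, 0 < 1 + u t := fun t => by linarith [hu0 t]
  have hu' : ∀ t, HasDerivAt u (-(c * lam t) * u t) t := by
    intro t
    have h1 := (((hΛ' t).const_mul c).neg.exp).const_mul a
    refine h1.congr_deriv ?_
    simp only [hu_def, Pi.neg_apply]
    ring
  set z : ℝ → ℝ := fun t => c * u t / (1 + u t) with hz_def
  have hz_mem : ∀ t, z t ∈ Ico (0:ℝ) c := by
    intro t
    constructor
    · exact div_nonneg (mul_nonneg hc.le (hu0 t)) (h1u t).le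
    · rw [hz_def]
      simp only
      rw [div_lt_iff₀ (h1u t)]
      nlinarith [hu0 t]
  have hz' : ∀ t, HasDerivAt z (lam t * z t * (z t - c)) t := by
    intro t
    have hd := ((hu' t).const_mul c).div ((hu' t).const_add 1) (h1u t).ne'
    refine hd.congr_deriv ?_
    rw [hz_def]
    simp only
    have h1ne := (h1u t).ne'
    field_simp
    ring
  have hz0 : z 0 = x 0 := by
    have hΛ0 : Λ 0 = 0 := intervalIntegral.integral_same
    rw [hz_def]
    simp only [hΛ0, mul_zero, neg_zero, Real.exp_zero, mul_one, hu_def, ha_def]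
    field_simp
    ring
  -- uniqueness: x = z on [0, ∞)
  have key : ∀ t ≥ (0:ℝ), x t = z t := by
    intro T hT
    have hxc : ContinuousOn x (Icc 0 T) := fun t ht =>
      (hx t ht.1).continuousAt.continuousWithinAt
    have hzc : ContinuousOn z (Icc 0 T) := fun t _ =>
      (hz' t).continuousAt.continuousWithinAt
    obtain ⟨L, hL⟩ := (isCompact_Icc (a := (0:ℝ)) (b := T)).exists_bound_of_continuousOn
      hlamc.continuousOn
    obtain ⟨C, hC⟩ := (isCompact_Icc (a := (0:ℝ)) (b := T)).exists_bound_of_continuousOn hxc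
    set R : ℝ := max c (max C 1) with hR_def
    have hcR : c ≤ R := le_max_left _ _
    have hCR : C ≤ R := le_trans (le_max_left _ _) (le_max_right _ _)
    have hR0 : 0 < R := lt_of_lt_of_le hc hcR
    set L' : ℝ := max L 0 with hL'_def
    have hL'0 : 0 ≤ L' := le_max_right _ _
    set vv : ℝ → ℝ → ℝ := fun t y => lam (max 0 (min t T)) * y * (y - c) with hvv_def
    set K : NNReal := (L' * (2 * R + c)).toNNReal with hK_def
    have hKe : (K : ℝ) = L' * (2 * R + c) :=
      Real.coe_toNNReal _ (by positivity)
    have hlamb : ∀ t : ℝ, |lam (max 0 (min t T))| ≤ L' := by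
      intro t
      refine le_trans ?_ (le_max_left L 0)
      have : max 0 (min t T) ∈ Icc (0:ℝ) T :=
        ⟨le_max_left _ _, max_le hT (min_le_right _ _)⟩
      simpa [Real.norm_eq_abs] using hL _ this
    have hv : ∀ t, LipschitzOnWith K (vv t) (Icc (-R) R) := by
      intro t
      apply LipschitzOnWith.of_dist_le_mul
      intro y1 h1 y2 h2
      rw [Real.dist_eq, Real.dist_eq, hKe]
      have e1 : vv t y1 - vv t y2 =
          lam (max 0 (min t T)) * ((y1 - y2) * (y1 + y2 - c)) := by
        rw [hvv_def]; ring
      rw [e1, abs_mul, abs_mul]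
      have h3 : |y1 + y2 - c| ≤ 2 * R + c := by
        rw [abs_le]
        constructor <;> [skip; skip] <;>
          · obtain ⟨ha1, hb1⟩ := h1; obtain ⟨ha2, hb2⟩ := h2; linarith
      calc |lam (max 0 (min t T))| * (|y1 - y2| * |y1 + y2 - c|)
          ≤ L' * (|y1 - y2| * (2 * R + c)) := by
            apply mul_le_mul (hlamb t) _ (by positivity) hL'0
            exact mul_le_mul_of_nonneg_left h3 (abs_nonneg _)
        _ = L' * (2 * R + c) * |y1 - y2| := by ring
    have hclamp : ∀ t ∈ Ico (0:ℝ) T, max 0 (min t T) = t := by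
      intro t ht
      rw [min_eq_left ht.2.le, max_eq_right ht.1]
    have hf' : ∀ t ∈ Ico (0:ℝ) T, HasDerivWithinAt x (vv t (x t)) (Ici t) t := by
      intro t ht
      have : vv t (x t) = lam t * x t * (x t - c) := by rw [hvv_def]; simp [hclamp t ht]
      rw [this]
      exact (hx t ht.1).hasDerivWithinAt
    have hg' : ∀ t ∈ Ico (0:ℝ) T, HasDerivWithinAt z (vv t (z t)) (Ici t) t := by
      intro t ht
      have : vv t (z t) = lam t * z t * (z t - c) := by rw [hvv_def]; simp [hclamp t ht]
      rw [this]
      exact (hz' t).hasDerivWithinAt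
    have hfs : ∀ t ∈ Ico (0:ℝ) T, x t ∈ Icc (-R) R := by
      intro t ht
      have := hC t ⟨ht.1, ht.2.le⟩
      rw [Real.norm_eq_abs, abs_le] at this
      exact ⟨by linarith [this.1], by linarith [this.2]⟩
    have hgs : ∀ t ∈ Ico (0:ℝ) T, z t ∈ Icc (-R) R := by
      intro t _
      obtain ⟨h1, h2⟩ := hz_mem t
      exact ⟨by linarith, by linarith⟩
    have huniq := ODE_solution_unique_of_mem_Icc_right
      (v := vv) (s := fun _ => Icc (-R) R) (K := K) (fun t _ => hv t) hxc hf' hfs hzc hg' hgs hz0.symm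
    exact huniq ⟨hT, le_rfl⟩
  -- positivity of lam
  have hlam_pos : ∀ t : ℝ, 0 < lam t := fun t => lt_of_lt_of_le hlam₀ (hlam t)
  refine ⟨fun t ht => (key t ht) ▸ hz_mem t, ?_, ?_⟩
  · -- antitone
    have hz_anti : AntitoneOn z (Ici (0:ℝ)) := by
      apply antitoneOn_of_deriv_nonpos (convex_Ici 0)
      · exact fun t _ => (hz' t).continuousAt.continuousWithinAt
      · exact fun t _ => (hz' t).differentiableAt.differentiableWithinAt
      · intro t _
        rw [(hz' t).deriv]
        obtain ⟨h1, h2⟩ := hz_mem t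
        have := hlam_pos t
        exact mul_nonpos_of_nonneg_of_nonpos (mul_nonneg this.le h1) (by linarith)
    intro s hs t ht hst
    rw [key s hs, key t ht]
    exact hz_anti hs ht hst
  · -- tendsto
    have hΛ_ge : ∀ t ≥ (0:ℝ), lam₀ * t ≤ Λ t := by
      intro t ht
      have hmono : ∫ s in (0:ℝ)..t, lam₀ ≤ ∫ s in (0:ℝ)..t, lam s :=
        intervalIntegral.integral_mono_on ht intervalIntegrable_const
          (hlamc.intervalIntegrable _ _) fun s _ => hlam s
      rw [intervalIntegral.integral_const] at hmono
      simp only [sub_zero, smul_eq_mul] at hmono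
      rw [hΛ_def]
      linarith [hmono]
    have hb : Tendsto (fun t : ℝ => a * Real.exp (-(c * (lam₀ * t)))) atTop (nhds 0) := by
      have h1 : Tendsto (fun t : ℝ => (c * lam₀) * t) atTop atTop :=
        Tendsto.const_mul_atTop (by positivity) tendsto_id
      have h2 : Tendsto (fun t : ℝ => -(c * (lam₀ * t))) atTop atBot := by
        have h2' := tendsto_neg_atTop_atBot.comp h1
        have : (fun t : ℝ => -(c * (lam₀ * t))) = Neg.neg ∘ fun t : ℝ => (c * lam₀) * t := by
          funext t; simp [Function.comp, mul_assoc]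
        rw [this]; exact h2'
      have h3 := Real.tendsto_exp_atBot.comp h2
      have := h3.const_mul a
      simpa using this
    have hu_to : Tendsto u atTop (nhds 0) := by
      apply tendsto_of_tendsto_of_tendsto_of_le_of_le' tendsto_const_nhds hb
      · exact Eventually.of_forall hu0
      · filter_upwards [eventually_ge_atTop (0:ℝ)] with t ht
        rw [hu_def]
        simp only
        apply mul_le_mul_of_nonneg_left _ ha
        apply Real.exp_le_exp.2
        have := hΛ_ge t ht
        nlinarith
    have hz_to : Tendsto z atTop (nhds 0) := by
      have : Tendsto z atTop (nhds (c * 0 / (1 + 0))) :=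
        (hu_to.const_mul c).div (tendsto_const_nhds.add hu_to) (by norm_num)
      simpa using this
    apply hz_to.congr'
    filter_upwards [eventually_ge_atTop (0:ℝ)] with t ht
    exact (key t ht).symm
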